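/- Suppose f : E → ℝ is differentiable with ν-Hölder continuous gradient: ‖∇f(y) − ∇f(x)‖ ≤ L_ν ‖y − x‖^ν for all x, y, where ν ∈ [0,1]. Then for every δ > 0 and all x, y: f(x) ≤ f(y) + ⟨∇f(y), x − y⟩ + (L/2)‖x − y‖² + δ, where L = L_ν · ((L_ν/(2δ)) · (1−ν)/(1+ν))^{(1−ν)/(1+ν)} (interpreted as L = L_1 when ν = 1). -/

import Mathlib

open RealInnerProductSpace

/-- Young-type splitting of the `(1+ν)`-power into a quadratic plus `δ`. -/
lemma young_aux {ν Lν δ : ℝ} (hν0 : 0 ≤ ν) (hν1 : ν ≤ 1) (hL : 0 < Lν) (hδ : 0 < δ)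
    (u : ℝ) (hu : 0 ≤ u) :
    Lν / (1 + ν) * u ^ (1 + ν) ≤
      (Lν * ((Lν / (2 * δ)) * ((1 - ν) / (1 + ν))) ^ ((1 - ν) / (1 + ν)) / 2) * u ^ 2 + δ := by
  have h1ν : (0:ℝ) < 1 + ν := by linarith
  rcases eq_or_lt_of_le hν1 with hν1' | hν1'
  · -- ν = 1
    subst hν1'
    have h2 : u ^ ((1:ℝ) + 1) = u ^ 2 := by
      rw [show (1:ℝ)+1 = ((2:ℕ):ℝ) by norm_num, Real.rpow_natCast]
    rw [h2]
    norm_num [Real.rpow_zero]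
    nlinarith [sq_nonneg u]
  · -- ν < 1
    set θ : ℝ := (1 + ν) / 2 with hθdef
    set e : ℝ := (1 - ν) / (1 + ν) with hedef
    set A : ℝ := Lν / (1 + ν) with hAdef
    set K : ℝ := Lν / (2 * δ) * ((1 - ν) / (1 + ν)) with hKdef
    have hθ0 : 0 < θ := by positivity
    have hθ1 : θ < 1 := by rw [hθdef]; linarith
    have h1θ : 0 < 1 - θ := by linarith
    have hA : 0 < A := by positivity
    have hK : 0 < K := by
      have : (0:ℝ) < (1 - ν)/(1 + ν) := div_pos (by linarith) h1ν
      rw [hKdef]; positivity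
    have he : e = (1 - θ)/θ := by
      rw [hedef, hθdef]; field_simp; ring
    have heθ : e * θ = 1 - θ := by
      rw [he]; field_simp
    -- rewrite u^(1+ν) = (u^2)^θ
    have hw : u ^ (1 + ν) = (u ^ 2) ^ θ := by
      rw [← Real.rpow_natCast u 2, ← Real.rpow_mul hu]
      norm_num [hθdef]
      ring_nf
    set w : ℝ := u ^ 2 with hwdef
    have hw0 : 0 ≤ w := sq_nonneg u
    set B : ℝ := Lν * K ^ e / 2 with hBdef
    rw [hw]
    show A * w ^ θ ≤ B * w + δ
    -- key identities
    have hBθ : B / θ = A * K ^ e := by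
      rw [hBdef, hθdef, hAdef]; field_simp
    have hδθ : δ / (1 - θ) = A / K := by
      have : K = A * (1 - θ) / δ := by
        rw [hKdef, hAdef, hθdef]; field_simp; ring
      rw [this]; field_simp
    -- AM-GM
    have amgm := Real.geom_mean_le_arith_mean2_weighted (le_of_lt hθ0) (le_of_lt h1θ)
      (p₁ := B * w / θ) (p₂ := δ / (1 - θ))
      (div_nonneg (by positivity) hθ0.le) (div_nonneg hδ.le h1θ.le) (by ring)
    have hsum : θ * (B * w / θ) + (1 - θ) * (δ / (1 - θ)) = B * w + δ := by
      field_simp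
    rw [hsum] at amgm
    refine le_trans (le_of_eq ?_) amgm
    -- A * w^θ = (B*w/θ)^θ * (δ/(1-θ))^(1-θ)
    have h1 : B * w / θ = A * K ^ e * w := by rw [mul_comm B w, mul_div_assoc, hBθ]; ring
    rw [h1, hδθ]
    rw [Real.mul_rpow (by positivity) hw0, Real.mul_rpow hA.le (by positivity),
      Real.div_rpow hA.le hK.le, ← Real.rpow_mul hK.le, heθ]
    have hAA : A ^ θ * A ^ (1 - θ) = A := by
      rw [← Real.rpow_add hA]; norm_num
    field_simp
    calc A * w ^ θ = (A ^ θ * A ^ (1-θ)) * w ^ θ := by rw [hAA]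
      _ = w ^ θ * A ^ θ * A ^ (1 - θ) := by ring


lemma descent_aux {E : Type*} [NormedAddCommGroup E] [InnerProductSpace ℝ E] [CompleteSpace E]
    (f : E → ℝ) (g : E → E) (hf : ∀ x, HasGradientAt f (g x) x)
    (ν Lν : ℝ) (hν0 : 0 ≤ ν) (hLν : 0 < Lν)
    (hHolder : ∀ x y : E, ‖g y - g x‖ ≤ Lν * ‖y - x‖ ^ ν) (x y : E) :
    f x ≤ f y + ⟪g y, x - y⟫ + Lν / (1 + ν) * ‖x - y‖ ^ (1 + ν) := by
  have h1ν : (0:ℝ) < 1 + ν := by linarith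
  set v : E := x - y with hv
  set C : ℝ := Lν * ‖v‖ ^ (1 + ν) with hC
  have hC0 : 0 ≤ C := by positivity
  set φ : ℝ → ℝ := fun t => f (y + t • v) with hφdef
  have hline : ∀ t : ℝ, HasDerivAt (fun t : ℝ => y + t • v) v t := fun t => by
    simpa using ((hasDerivAt_id t).smul_const v).const_add y
  have hφ : ∀ t : ℝ, HasDerivAt φ ⟪g (y + t • v), v⟫ t := fun t => by
    have h := (hasGradientAt_iff_hasFDerivAt.mp (hf (y + t • v))).comp_hasDerivAt t (hline t)
    simp [InnerProductSpace.toDual_apply_apply] at h; exact h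
  set F : ℝ → ℝ := fun t => φ t - ⟪g y, v⟫ * t - C / (1 + ν) * t ^ (1 + ν) with hFdef
  have hF : ∀ t : ℝ, HasDerivAt F (⟪g (y + t • v), v⟫ - ⟪g y, v⟫ - C * t ^ ν) t := by
    intro t
    have hr : HasDerivAt (fun s : ℝ => s ^ (1 + ν)) ((1 + ν) * t ^ ν) t := by
      have h := Real.hasDerivAt_rpow_const (x := t) (p := 1 + ν) (Or.inr (by linarith))
      simpa [add_sub_cancel_left] using h
    have h := ((hφ t).sub (((hasDerivAt_id t).const_mul ⟪g y, v⟫))).sub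
      (hr.const_mul (C / (1 + ν)))
    refine h.congr_deriv ?_
    have hne : (1 + ν) ≠ 0 := ne_of_gt h1ν
    field_simp
  have hdiff : Differentiable ℝ F := fun t => (hF t).differentiableAt
  have hanti : AntitoneOn F (Set.Icc 0 1) := by
    apply antitoneOn_of_deriv_nonpos (convex_Icc 0 1) hdiff.continuous.continuousOn
      hdiff.differentiableOn
    intro t ht
    rw [interior_Icc] at ht
    rw [(hF t).deriv]
    have hin : ⟪g (y + t • v), v⟫ - ⟪g y, v⟫ = ⟪g (y + t • v) - g y, v⟫ := by
      rw [inner_sub_left]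
    rw [hin]
    have h1 : ⟪g (y + t • v) - g y, v⟫ ≤ ‖g (y + t • v) - g y‖ * ‖v‖ :=
      real_inner_le_norm _ _
    have h2 : ‖g (y + t • v) - g y‖ ≤ Lν * ‖(y + t • v) - y‖ ^ ν := hHolder y (y + t • v)
    have h3 : ‖(y + t • v) - y‖ = t * ‖v‖ := by
      simp [norm_smul, abs_of_pos ht.1]
    have h4 : (t * ‖v‖) ^ ν = t ^ ν * ‖v‖ ^ ν := Real.mul_rpow ht.1.le (norm_nonneg v)
    have h5 : ‖v‖ ^ ν * ‖v‖ = ‖v‖ ^ (1 + ν) := by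
      rw [add_comm, Real.rpow_add' (norm_nonneg v) (by positivity : ν + 1 ≠ 0), Real.rpow_one]
    have h6 : ‖g (y + t • v) - g y‖ * ‖v‖ ≤ C * t ^ ν := by
      calc ‖g (y + t • v) - g y‖ * ‖v‖ ≤ (Lν * ((t * ‖v‖) ^ ν)) * ‖v‖ := by
              rw [← h3]; exact mul_le_mul_of_nonneg_right h2 (norm_nonneg v)
        _ = Lν * (‖v‖ ^ ν * ‖v‖) * t ^ ν := by rw [h4]; ring
        _ = C * t ^ ν := by rw [h5, hC]
    have htν : (0:ℝ) ≤ t ^ ν := Real.rpow_nonneg ht.1.le ν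
    linarith [le_trans h1 h6]
  have key : F 1 ≤ F 0 := hanti (Set.left_mem_Icc.2 zero_le_one)
    (Set.right_mem_Icc.2 zero_le_one) zero_le_one
  have hF0 : F 0 = f y := by
    simp [hFdef, hφdef, Real.zero_rpow (ne_of_gt h1ν)]
  have hF1 : F 1 = f x - ⟪g y, v⟫ - C / (1 + ν) := by
    simp [hFdef, hφdef, Real.one_rpow, hv]
  rw [hF0, hF1] at key
  have : C / (1 + ν) = Lν / (1 + ν) * ‖v‖ ^ (1 + ν) := by rw [hC]; ring
  linarith [key, this ▸ key]

/-- If `f : E → ℝ` is differentiable with `ν`-Hölder continuous gradient,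
`‖∇f y - ∇f x‖ ≤ L_ν ‖y - x‖^ν` for all `x, y`, `ν ∈ [0,1]`, then for every `δ > 0`
and all `x, y`: `f x ≤ f y + ⟪∇f y, x - y⟫ + (L/2)‖x - y‖² + δ`, where
`L = L_ν * ((L_ν/(2δ)) * (1-ν)/(1+ν))^((1-ν)/(1+ν))`. -/
theorem stmt6 {E : Type*} [NormedAddCommGroup E] [InnerProductSpace ℝ E] [CompleteSpace E]
    (f : E → ℝ) (g : E → E) (hf : ∀ x, HasGradientAt f (g x) x)
    (ν Lν : ℝ) (hν : ν ∈ Set.Icc (0 : ℝ) 1) (hLν : 0 < Lν)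
    (hHolder : ∀ x y : E, ‖g y - g x‖ ≤ Lν * ‖y - x‖ ^ ν) :
    ∀ δ : ℝ, 0 < δ → ∀ x y : E,
      f x ≤ f y + ⟪g y, x - y⟫ +
        (Lν * ((Lν / (2 * δ)) * ((1 - ν) / (1 + ν))) ^ ((1 - ν) / (1 + ν)) / 2) *
          ‖x - y‖ ^ 2 + δ := by
  intro δ hδ x y
  obtain ⟨hν0, hν1⟩ := hν
  have hd := descent_aux f g hf ν Lν hν0 hLν hHolder x y
  have hy := young_aux hν0 hν1 hLν hδ ‖x - y‖ (norm_nonneg _)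
  linarith
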